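/- Let X be a real Hilbert space. For i ∈ {1,2}, let m_i be a positive integer and let H^{(i)}_1, …, H^{(i)}_{m_i} be closed linear subspaces of X; for S ∈ {0,1}^{m_i} define P̄_S := Q_{S,m_i} ∘ Q_{S,m_i−1} ∘ ⋯ ∘ Q_{S,1}, where Q_{S,j} is the orthogonal projection onto H^{(i)}_j if S_j = 1 and the identity if S_j = 0; and for E, D ∈ {0,1}^{m_i} with E ≥ D componentwise define K(E, D, x) := co{ P̄_S(x) : S ∈ {0,1}^{m_i}, E ≥ S ≥ D }. Let E^{(i)} ≥ D^{(i)} in {0,1}^{m_i} for i = 1,2, and let x₁, x₂, x₃ ∈ X. If x₂ ∈ K(E^{(1)}, D^{(1)}, x₁) (computed with respect to the subspaces H^{(1)}_1,…,H^{(1)}_{m₁}) and x₃ ∈ K(E^{(2)}, D^{(2)}, x₂) (computed with respect to H^{(2)}_1,…,H^{(2)}_{m₂}), then x₃ ∈ K([E^{(1)},E^{(2)}], [D^{(1)},D^{(2)}], x₁) computed with respect to the concatenated sequence of subspaces H^{(1)}_1,…,H^{(1)}_{m₁}, H^{(2)}_1,…,H^{(2)}_{m₂}, where [E^{(1)},E^{(2)}]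 and [D^{(1)},D^{(2)}] denote concatenation of the 0–1 vectors. (Theorem 6.3.) -/

import Mathlib

open scoped RealInnerProductSpace
open Classical

/-- The metric projection onto a set `C`: the nearest point to `z` in `C`, when a
(necessarily unique, for `C` nonempty closed convex in a Hilbert space) nearest
point exists; `z` itself otherwise. -/
noncomputable def metricProj {X : Type*} [NormedAddCommGroup X] (C : Set X) (z : X) : X :=
  if h : ∃ p, p ∈ C ∧ ∀ y ∈ C, ‖z - p‖ ≤ ‖z - y‖ then h.choose else z

/-- `P̄_S = Q_{S,k} ∘ ⋯ ∘ Q_{S,1}`, where `Q_{S,j}` is the orthogonal projection onto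
the subspace `H j` if `S j = true` and the identity otherwise. -/
noncomputable def barP {X : Type*} [NormedAddCommGroup X] [InnerProductSpace ℝ X]
    {k : ℕ} (H : Fin k → Submodule ℝ X) (S : Fin k → Bool) (x : X) : X :=
  Fin.foldl k (fun acc j => if S j then metricProj (H j : Set X) acc else acc) x

/-- `K(E, D, x) = co{ P̄_S(x) : E ≥ S ≥ D }`. -/
noncomputable def Kset {X : Type*} [NormedAddCommGroup X] [InnerProductSpace ℝ X]
    {k : ℕ} (H : Fin k → Submodule ℝ X) (E D : Fin k → Bool) (x : X) : Set X :=
  convexHull ℝ {y : X | ∃ S : Fin k → Bool, (∀ j, D j ≤ S j ∧ S j ≤ E j) ∧ y = barP H S x}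

lemma metricProj_eq_orthProj {X : Type*} [NormedAddCommGroup X] [InnerProductSpace ℝ X]
    [CompleteSpace X] (K : Submodule ℝ X) [CompleteSpace K] (z : X) :
    metricProj (K : Set X) z = K.orthogonalProjectionOnto z := by
  have hex : ∃ p, p ∈ (K : Set X) ∧ ∀ y ∈ (K : Set X), ‖z - p‖ ≤ ‖z - y‖ := by
    refine ⟨K.orthogonalProjectionOnto z, Submodule.coe_mem _, fun y hy => ?_⟩
    have : ‖z - (K.orthogonalProjectionOnto z : X)‖ = ⨅ w : K, ‖z - w‖ :=
      Submodule.starProjection_minimal (𝕜 := ℝ) (U := K) z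
    rw [this]
    exact ciInf_le ⟨0, by rintro r ⟨w, rfl⟩; positivity⟩ (⟨y, hy⟩ : K)
  rw [metricProj, dif_pos hex]
  obtain ⟨hm, hmin⟩ := hex.choose_spec
  refine (Submodule.eq_starProjection_of_mem_of_inner_eq_zero hm ?_).symm
  rw [← Submodule.norm_eq_iInf_iff_inner_eq_zero K hm]
  refine le_antisymm (le_ciInf fun w => hmin w w.2) ?_
  exact ciInf_le ⟨0, by rintro r ⟨w, rfl⟩; positivity⟩ (⟨_, hm⟩ : K)

lemma fin_foldl_add {α : Type*} (m n : ℕ) (f : α → Fin (m + n) → α) (x : α) :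
    Fin.foldl (m + n) f x =
      Fin.foldl n (fun a j => f a (Fin.natAdd m j))
        (Fin.foldl m (fun a j => f a (Fin.castAdd n j)) x) := by
  induction n with
  | zero =>
    rw [Fin.foldl_zero]
    have h : (fun a (j : Fin m) => f a (Fin.castAdd 0 j)) = f := by
      funext a j; exact congrArg (f a) (Fin.ext rfl)
    rw [h]
    rfl
  | succ n ih =>
    show Fin.foldl ((m + n) + 1) f x =
      Fin.foldl (n + 1) (fun a j => f a (Fin.natAdd m j))
        (Fin.foldl m (fun a j => f a (Fin.castAdd (n + 1) j)) x)
    rw [Fin.foldl_succ_last (n := m + n) f x,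
        ih (fun a j => f a j.castSucc),
        Fin.foldl_succ_last (n := n)]
    have h1 : (fun a (j : Fin n) => f a (Fin.natAdd m j).castSucc)
        = (fun a (j : Fin n) => f a (Fin.natAdd m j.castSucc)) := by
      funext a j; exact congrArg (f a) (Fin.ext rfl)
    have h2 : (fun a (j : Fin m) => f a (Fin.castAdd n j).castSucc)
        = (fun a (j : Fin m) => f a (Fin.castAdd (n + 1) j)) := by
      funext a j; exact congrArg (f a) (Fin.ext rfl)
    have h3 : Fin.last (m + n) = Fin.natAdd m (Fin.last n) := Fin.ext rfl
    rw [h1, h2, h3]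

lemma barP_append {X : Type*} [NormedAddCommGroup X] [InnerProductSpace ℝ X]
    {m₁ m₂ : ℕ} (H1 : Fin m₁ → Submodule ℝ X) (H2 : Fin m₂ → Submodule ℝ X)
    (S1 : Fin m₁ → Bool) (S2 : Fin m₂ → Bool) (x : X) :
    barP (Fin.append H1 H2) (Fin.append S1 S2) x = barP H2 S2 (barP H1 S1 x) := by
  unfold barP
  rw [fin_foldl_add]
  congr 1
  · funext a j; simp [Fin.append_right]
  · congr 1
    funext a j; simp [Fin.append_left]

lemma barP_exists_lm {X : Type*} [NormedAddCommGroup X] [InnerProductSpace ℝ X]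
    [CompleteSpace X] : ∀ {k : ℕ} (H : Fin k → Submodule ℝ X),
    (∀ j, IsClosed (H j : Set X)) → ∀ (S : Fin k → Bool),
    ∃ f : X →ₗ[ℝ] X, ∀ x, barP H S x = f x := by
  intro k
  induction k with
  | zero => exact fun H _ S => ⟨LinearMap.id, fun x => by simp [barP]⟩
  | succ k ih =>
    intro H hH S
    obtain ⟨f, hf⟩ := ih (H ∘ Fin.castSucc) (fun j => hH _) (S ∘ Fin.castSucc)
    have key : ∀ x, Fin.foldl k
        (fun acc j => if S j.castSucc then metricProj ((H j.castSucc : Submodule ℝ X) : Set X) acc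
          else acc) x = f x := fun x => hf x
    by_cases hs : S (Fin.last k)
    · haveI : CompleteSpace (H (Fin.last k)) := (hH _).completeSpace_coe
      refine ⟨((H (Fin.last k)).subtype.comp
        ((H (Fin.last k)).orthogonalProjectionOnto).toLinearMap).comp f, fun x => ?_⟩
      simp only [barP, Fin.foldl_succ_last]
      rw [if_pos hs, key x, metricProj_eq_orthProj]
      rfl
    · refine ⟨f, fun x => ?_⟩
      simp only [barP, Fin.foldl_succ_last]
      rw [if_neg hs]
      exact key x

/-- Theorem 6.3: the sets `K(E, D, x)` compose under concatenation of the families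
of subspaces. -/
theorem Kset_concat {X : Type*} [NormedAddCommGroup X] [InnerProductSpace ℝ X]
    [CompleteSpace X] {m₁ m₂ : ℕ} (hm₁ : 0 < m₁) (hm₂ : 0 < m₂)
    (H1 : Fin m₁ → Submodule ℝ X) (H2 : Fin m₂ → Submodule ℝ X)
    (hH1 : ∀ j, IsClosed (H1 j : Set X)) (hH2 : ∀ j, IsClosed (H2 j : Set X))
    (E1 D1 : Fin m₁ → Bool) (E2 D2 : Fin m₂ → Bool)
    (hED1 : ∀ j, D1 j ≤ E1 j) (hED2 : ∀ j, D2 j ≤ E2 j)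
    (x₁ x₂ x₃ : X)
    (h12 : x₂ ∈ Kset H1 E1 D1 x₁) (h23 : x₃ ∈ Kset H2 E2 D2 x₂) :
    x₃ ∈ Kset (Fin.append H1 H2) (Fin.append E1 E2) (Fin.append D1 D2) x₁ := by
  set B := {y : X | ∃ S : Fin (m₁ + m₂) → Bool,
      (∀ j, Fin.append D1 D2 j ≤ S j ∧ S j ≤ Fin.append E1 E2 j) ∧
      y = barP (Fin.append H1 H2) S x₁} with hB
  have hgoal : Kset (Fin.append H1 H2) (Fin.append E1 E2) (Fin.append D1 D2) x₁
      = convexHull ℝ B := rfl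
  have hsub : {y : X | ∃ T : Fin m₂ → Bool, (∀ j, D2 j ≤ T j ∧ T j ≤ E2 j) ∧ y = barP H2 T x₂}
      ⊆ convexHull ℝ B := by
    rintro _ ⟨T, hT, rfl⟩
    obtain ⟨f, hf⟩ := barP_exists_lm H2 hH2 T
    rw [hf]
    have himg : f x₂ ∈ convexHull ℝ
        (f '' {y : X | ∃ S : Fin m₁ → Bool, (∀ j, D1 j ≤ S j ∧ S j ≤ E1 j) ∧ y = barP H1 S x₁}) := by
      rw [← f.image_convexHull]
      exact Set.mem_image_of_mem f h12
    refine convexHull_mono ?_ himg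
    rintro _ ⟨_, ⟨S, hS, rfl⟩, rfl⟩
    refine ⟨Fin.append S T, fun j => ?_, ?_⟩
    · refine Fin.addCases (fun i => ?_) (fun i => ?_) j
      · simpa [Fin.append_left] using hS i
      · simpa [Fin.append_right] using hT i
    · rw [barP_append, hf]
  rw [hgoal]
  exact convexHull_min hsub (convex_convexHull ℝ B) h23
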